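/- (Sturm–Tarski / generalized Sturm theorem) Let f, g ∈ ℝ[X] be nonzero polynomials with f nonconstant (so f'·g ≠ 0). Then ν(f, f'·g) = N(f, g), where f' is the formal derivative of f. -/

import Mathlib

/-- The canonical (generalized Sturm) sequence for `p` and `q`:
`h₀ = p`, `h₁ = q`, `h_{k+2} = −(h_k mod h_{k+1})` (remainder of polynomial division). -/
noncomputable def sturmAux (p q : Polynomial ℝ) : ℕ → Polynomial ℝ
  | 0 => p
  | 1 => q
  | k + 2 => -(sturmAux p q k % sturmAux p q (k + 1))

/-- `σ_{+∞}(h) = +` : `h(x) > 0` for all sufficiently large real `x`. -/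
def sigmaTop (h : Polynomial ℝ) : Prop := ∀ᶠ x in Filter.atTop, 0 < h.eval x

/-- `σ_{−∞}(h) = +` : `h(x) > 0` for all sufficiently negative real `x`. -/
def sigmaBot (h : Polynomial ℝ) : Prop := ∀ᶠ x in Filter.atBot, 0 < h.eval x

/-- The number of sign changes (with respect to the sign function `σ`) in the tuple
`(S 0, S 1, …, S m)`: the number of consecutive pairs with different signs. -/
noncomputable def signChanges (S : ℕ → Polynomial ℝ) (m : ℕ)
    (σ : Polynomial ℝ → Prop) : ℕ :=
  {i : ℕ | i < m ∧ ¬ (σ (S i) ↔ σ (S (i + 1)))}.ncard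

/-- `ν(p,q)` computed on the canonical Sturm sequence
`(h₀/h_m, h₁/h_m, …, h_m/h_m = 1)` (where `m` is the stopping index of the canonical
sequence): the number of sign changes at `−∞` minus the number of sign changes
at `+∞`. -/
noncomputable def sturmNu (p q : Polynomial ℝ) (m : ℕ) : ℤ :=
  (signChanges (fun i => sturmAux p q i / sturmAux p q m) m sigmaBot : ℤ)
    - (signChanges (fun i => sturmAux p q i / sturmAux p q m) m sigmaTop : ℤ)

/-- `N(f,g)`: the number of real roots of `f` at which `g` is positive minus the number
of real roots of `f` at which `g` is negative. -/
noncomputable def sturmN (f g : Polynomial ℝ) : ℤ :=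
  ({x : ℝ | f.eval x = 0 ∧ 0 < g.eval x}.ncard : ℤ)
    - ({x : ℝ | f.eval x = 0 ∧ g.eval x < 0}.ncard : ℤ)


open Polynomial Set Finset
open scoped Classical

lemma neq_iff_mul_neg {u v : ℝ} (hu : u ≠ 0) (hv : v ≠ 0) :
    (¬(0 < u ↔ 0 < v)) ↔ u * v < 0 := by
  constructor
  · intro hh
    rcases hu.lt_or_gt with h | h <;> rcases hv.lt_or_gt with h' | h'
    · exact absurd (iff_of_false (lt_asymm h) (lt_asymm h')) hh
    · exact mul_neg_of_neg_of_pos h h'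
    · exact mul_neg_of_pos_of_neg h h'
    · exact absurd (iff_of_true h h') hh
  · intro hh hi
    rcases hu.lt_or_gt with h | h <;> rcases hv.lt_or_gt with h' | h'
    · nlinarith
    · exact lt_asymm h (hi.mpr h')
    · exact lt_asymm h' (hi.mp h)
    · nlinarith

lemma sign_const_of_no_root (p : Polynomial ℝ) {a b : ℝ} (hab : a ≤ b)
    (h : ∀ x ∈ Set.Icc a b, p.eval x ≠ 0) : (0 < p.eval a ↔ 0 < p.eval b) := by
  have hc : ContinuousOn (fun x => p.eval x) (Set.Icc a b) := p.continuous.continuousOn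
  have ha : p.eval a ≠ 0 := h a ⟨le_refl a, hab⟩
  have hb : p.eval b ≠ 0 := h b ⟨hab, le_refl b⟩
  by_contra hne
  rw [neq_iff_mul_neg ha hb] at hne
  rcases ha.lt_or_gt with h1 | h1
  · have h2 : 0 < p.eval b := by nlinarith
    obtain ⟨x, hx, hx0⟩ := intermediate_value_Icc hab hc ⟨h1.le, h2.le⟩
    exact h x hx hx0
  · have h2 : p.eval b < 0 := by nlinarith
    obtain ⟨x, hx, hx0⟩ := intermediate_value_Icc' hab hc ⟨h2.le, h1.le⟩
    exact h x hx hx0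

lemma sigmaBot_iff (p : Polynomial ℝ) (A : ℝ) (h : ∀ x ≤ A, p.eval x ≠ 0) :
    (sigmaBot p ↔ 0 < p.eval A) := by
  constructor
  · intro hs
    obtain ⟨x, hx, hx0⟩ := (hs.and (Filter.eventually_le_atBot A)).exists
    exact ((sign_const_of_no_root p hx0 (fun y hy => h y hy.2)).mp hx)
  · intro hA
    filter_upwards [Filter.eventually_le_atBot A] with x hx
    exact (sign_const_of_no_root p hx (fun y hy => h y hy.2)).mpr hA

lemma sigmaTop_iff (p : Polynomial ℝ) (A : ℝ) (h : ∀ x, A ≤ x → p.eval x ≠ 0) :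
    (sigmaTop p ↔ 0 < p.eval A) := by
  constructor
  · intro hs
    obtain ⟨x, hx, hx0⟩ := (hs.and (Filter.eventually_ge_atTop A)).exists
    exact ((sign_const_of_no_root p hx0 (fun y hy => h y hy.1)).mpr hx)
  · intro hA
    filter_upwards [Filter.eventually_ge_atTop A] with x hx
    exact (sign_const_of_no_root p hx (fun y hy => h y hy.1)).mp hA

lemma ffderiv_pos_right (f : Polynomial ℝ) {r b : ℝ} (hrb : r < b) (hroot : f.eval r = 0)
    (hne : ∀ x, r < x → x ≤ b → f.eval x ≠ 0 ∧ (derivative f).eval x ≠ 0) :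
    0 < f.eval b * (derivative f).eval b := by
  have hder : ∀ x : ℝ, HasDerivAt (fun y => (f.eval y) ^ 2)
      (2 * f.eval x * (derivative f).eval x) x := by
    intro x
    have := ((f.hasDerivAt x).fun_pow 2)
    exact this.congr_deriv (by push_cast; ring)
  obtain ⟨c, hc, hc2⟩ := exists_deriv_eq_slope (fun y => (f.eval y) ^ 2) hrb
    ((f.continuous.pow 2).continuousOn)
    (fun x _ => (hder x).differentiableAt.differentiableWithinAt)
  have hbne := hne b hrb le_rfl
  have hϕb : 0 < (f.eval b) ^ 2 := lt_of_le_of_ne (sq_nonneg _) (Ne.symm (pow_ne_zero 2 hbne.1))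
  have hderc : deriv (fun y => (f.eval y) ^ 2) c = 2 * f.eval c * (derivative f).eval c :=
    (hder c).deriv
  have hcprod : 0 < f.eval c * (derivative f).eval c := by
    rw [hderc] at hc2
    have h1 : (0:ℝ) < b - r := by linarith [hrb]
    have h2 : eval r f ^ 2 = 0 := by rw [hroot]; ring
    rw [h2, eq_div_iff (ne_of_gt h1)] at hc2
    nlinarith [hc2, hϕb, h1]
  have hnoroot : ∀ x ∈ Set.Icc c b, (f * derivative f).eval x ≠ 0 := by
    intro x hx
    have h1 := hne x (lt_of_lt_of_le hc.1 hx.1) hx.2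
    simp only [eval_mul]
    exact mul_ne_zero h1.1 h1.2
  have := (sign_const_of_no_root (f * derivative f) hc.2.le hnoroot).mp
    (by simpa [eval_mul] using hcprod)
  simpa [eval_mul] using this

lemma ffderiv_neg_left (f : Polynomial ℝ) {a r : ℝ} (har : a < r) (hroot : f.eval r = 0)
    (hne : ∀ x, a ≤ x → x < r → f.eval x ≠ 0 ∧ (derivative f).eval x ≠ 0) :
    f.eval a * (derivative f).eval a < 0 := by
  have hder : ∀ x : ℝ, HasDerivAt (fun y => (f.eval y) ^ 2)
      (2 * f.eval x * (derivative f).eval x) x := by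
    intro x
    have := ((f.hasDerivAt x).fun_pow 2)
    exact this.congr_deriv (by push_cast; ring)
  obtain ⟨c, hc, hc2⟩ := exists_deriv_eq_slope (fun y => (f.eval y) ^ 2) har
    ((f.continuous.pow 2).continuousOn)
    (fun x _ => (hder x).differentiableAt.differentiableWithinAt)
  have hane := hne a le_rfl har
  have hϕa : 0 < (f.eval a) ^ 2 := lt_of_le_of_ne (sq_nonneg _) (Ne.symm (pow_ne_zero 2 hane.1))
  have hderc : deriv (fun y => (f.eval y) ^ 2) c = 2 * f.eval c * (derivative f).eval c :=
    (hder c).deriv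
  have hcprod : f.eval c * (derivative f).eval c < 0 := by
    rw [hderc] at hc2
    have h1 : (0:ℝ) < r - a := by linarith [har]
    have h2 : eval r f ^ 2 = 0 := by rw [hroot]; ring
    rw [h2, eq_div_iff (ne_of_gt h1)] at hc2
    nlinarith [hc2, hϕa, h1]
  have hnoroot : ∀ x ∈ Set.Icc a c, (f * derivative f).eval x ≠ 0 := by
    intro x hx
    have h1 := hne x hx.1 (lt_of_le_of_lt hx.2 hc.2)
    simp only [eval_mul]
    exact mul_ne_zero h1.1 h1.2
  have h3 : ¬ (0 < (f * derivative f).eval a) := by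
    intro h4
    have := (sign_const_of_no_root (f * derivative f) hc.1.le hnoroot).mp h4
    simp only [eval_mul] at this
    nlinarith
  have h5 : (f * derivative f).eval a ≠ 0 := hnoroot a ⟨le_rfl, hc.1.le⟩
  simp only [eval_mul] at h3 h5
  rcases lt_or_gt_of_ne h5 with h | h
  · exact h
  · exact absurd h h3

lemma sturmAux_rec (p q : Polynomial ℝ) (k : ℕ) :
    sturmAux p q k + sturmAux p q (k + 2)
      = sturmAux p q (k + 1) * (sturmAux p q k / sturmAux p q (k + 1)) := by
  have h := EuclideanDomain.div_add_mod (sturmAux p q k) (sturmAux p q (k + 1))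
  show sturmAux p q k + -(sturmAux p q k % sturmAux p q (k + 1)) = _
  linear_combination -h

-- nonvanishing
lemma sturmAux_ne_zero (p q : Polynomial ℝ) (m : ℕ) (hp : p ≠ 0) (hq : q ≠ 0)
    (hmin : ∀ k, 1 ≤ k → k < m → ¬ sturmAux p q k ∣ sturmAux p q (k - 1)) :
    ∀ k, k ≤ m → sturmAux p q k ≠ 0 := by
  intro k
  induction k using Nat.strong_induction_on with
  | _ k ih =>
    match k with
    | 0 => intro _; exact hp
    | 1 => intro _; exact hq
    | k + 2 =>
      intro hk h0
      have hdvd : sturmAux p q (k + 1) ∣ sturmAux p q k := by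
        have : sturmAux p q k % sturmAux p q (k + 1) = 0 := by
          have : -(sturmAux p q k % sturmAux p q (k + 1)) = 0 := h0
          simpa using this
        exact EuclideanDomain.mod_eq_zero.mp this
      exact hmin (k + 1) (Nat.le_add_left 1 k) (by omega) (by simpa using hdvd)

lemma sturmAux_dvd_of_stop (p q : Polynomial ℝ) (m : ℕ) (hm : 1 ≤ m)
    (hstop : sturmAux p q m ∣ sturmAux p q (m - 1)) :
    ∀ k, k ≤ m → sturmAux p q m ∣ sturmAux p q k := by
  -- first: sturmAux p q (m+1) = 0
  have hsucc : sturmAux p q (m + 1) = 0 := by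
    obtain ⟨m', rfl⟩ : ∃ m', m = m' + 1 := ⟨m - 1, by omega⟩
    show -(sturmAux p q m' % sturmAux p q (m' + 1)) = 0
    have : sturmAux p q m' % sturmAux p q (m' + 1) = 0 :=
      EuclideanDomain.mod_eq_zero.mpr (by simpa using hstop)
    simp [this]
  have key : ∀ j, j ≤ m → sturmAux p q m ∣ sturmAux p q (m - j)
      ∧ sturmAux p q m ∣ sturmAux p q (m - j + 1) := by
    intro j
    induction j with
    | zero =>
      intro _
      refine ⟨dvd_refl _, ?_⟩
      rw [(by omega : m - 0 + 1 = m + 1), hsucc]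
      exact dvd_zero _
    | succ j ih =>
      intro hj
      obtain ⟨h1, h2⟩ := ih (by omega)
      have he : m - (j+1) + 2 = m - j + 1 := by omega
      have he2 : m - (j+1) + 1 = m - j := by omega
      have hrec := sturmAux_rec p q (m - (j+1))
      rw [he, he2] at hrec
      constructor
      · have : sturmAux p q (m - (j+1)) = sturmAux p q (m - j) * (sturmAux p q (m-(j+1)) / sturmAux p q (m-j)) - sturmAux p q (m - j + 1) := by
          linear_combination hrec
        rw [this]
        exact dvd_sub (Dvd.dvd.mul_right h1 _) h2
      · rw [he2]; exact h1
  intro k hk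
  have := (key (m - k) (by omega)).1
  rwa [(by omega : m - (m - k) = k)] at this

lemma sturmAux_common_dvd (p q : Polynomial ℝ) (m : ℕ) :
    ∀ k, k < m → ∀ e : Polynomial ℝ, e ∣ sturmAux p q k → e ∣ sturmAux p q (k + 1) →
      e ∣ sturmAux p q m := by
  suffices H : ∀ n k, m - k - 1 = n → k < m → ∀ e : Polynomial ℝ,
      e ∣ sturmAux p q k → e ∣ sturmAux p q (k + 1) → e ∣ sturmAux p q m by
    intro k hk e h1 h2
    exact H (m - k - 1) k rfl hk e h1 h2
  intro n
  induction n with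
  | zero =>
    intro k hn hk e h1 h2
    have : k + 1 = m := by omega
    rwa [this] at h2
  | succ n ih =>
    intro k hn hk e h1 h2
    have h3 : e ∣ sturmAux p q (k + 2) := by
      have hrec := sturmAux_rec p q k
      have : sturmAux p q (k + 2) = sturmAux p q (k+1) * (sturmAux p q k / sturmAux p q (k+1)) - sturmAux p q k := by
        linear_combination hrec
      rw [this]
      exact dvd_sub (Dvd.dvd.mul_right h2 _) h1
    exact ih (k + 1) (by omega) (by omega) e h2 h3

noncomputable def sturmV (H : ℕ → Polynomial ℝ) (m : ℕ) (x : ℝ) : ℤ :=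
  ∑ i ∈ Finset.range m, if ¬((0:ℝ) < (H i).eval x ↔ 0 < (H (i+1)).eval x) then 1 else 0

/-- sign constancy on `[a,b]` for a polynomial whose only possible root there is `r`,
with `p r ≠ 0`. -/
lemma sign_const_punctured (p : Polynomial ℝ) {a b r : ℝ} (har : a ≤ r) (hrb : r ≤ b)
    (hp : p.eval r ≠ 0) (hno : ∀ x ∈ Set.Icc a b, x ≠ r → p.eval x ≠ 0) :
    ∀ x ∈ Set.Icc a b, (0 < p.eval x ↔ 0 < p.eval r) := by
  have hnoall : ∀ x ∈ Set.Icc a b, p.eval x ≠ 0 := by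
    intro x hx
    by_cases hxr : x = r
    · rw [hxr]; exact hp
    · exact hno x hx hxr
  intro x hx
  rcases le_total x r with h | h
  · exact sign_const_of_no_root p h (fun y hy => hnoall y ⟨hx.1.trans hy.1, hy.2.trans hrb⟩)
  · exact (sign_const_of_no_root p h (fun y hy => hnoall y ⟨har.trans hy.1, hy.2.trans hx.2⟩)).symm

lemma local_step (H : ℕ → Polynomial ℝ) (m : ℕ) (f g Pbig : Polynomial ℝ) (hm : 1 ≤ m)
    (hA : ∀ i x, i ≤ m → (H i).eval x = 0 → Pbig.eval x = 0)
    (hfP : ∀ x : ℝ, f.eval x = 0 → Pbig.eval x = 0)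
    (hgP : ∀ x : ℝ, g.eval x = 0 → Pbig.eval x = 0)
    (hdP : ∀ x : ℝ, (derivative f).eval x = 0 → Pbig.eval x = 0)
    (hB : H m = 1)
    (hC : ∀ i x, i < m → (H i).eval x = 0 → (H (i+1)).eval x ≠ 0)
    (hD : ∀ i x, i + 1 < m → (H (i+1)).eval x = 0 →
        (H i).eval x = -((H (i+2)).eval x))
    (hE : ∀ x : ℝ, (H 0).eval x = 0 ↔ (f.eval x = 0 ∧ g.eval x ≠ 0))
    (hF : ∀ y : ℝ, Pbig.eval y ≠ 0 → ∃ c : ℝ, 0 < c ∧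
        (H 0).eval y * (H 1).eval y * c = f.eval y * ((derivative f).eval y * g.eval y))
    {a b r : ℝ} (har : a < r) (hrb : r < b)
    (hno : ∀ x ∈ Set.Icc a b, x ≠ r → Pbig.eval x ≠ 0) :
    sturmV H m a - sturmV H m b =
      (if f.eval r = 0 ∧ 0 < g.eval r then 1
        else if f.eval r = 0 ∧ g.eval r < 0 then -1 else 0) := by
  have hab : a ≤ b := (har.trans hrb).le
  have ha : a ∈ Set.Icc a b := ⟨le_rfl, hab⟩
  have hb : b ∈ Set.Icc a b := ⟨hab, le_rfl⟩
  have hra : a ≠ r := har.ne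
  have hrb' : b ≠ r := hrb.ne'
  have hPa : Pbig.eval a ≠ 0 := hno a ha hra
  have hPb : Pbig.eval b ≠ 0 := hno b hb hrb'
  -- evaluation of H i is nonzero away from r
  have hHne : ∀ i, i ≤ m → ∀ x ∈ Set.Icc a b, x ≠ r → (H i).eval x ≠ 0 := by
    intro i hi x hx hxr h0
    exact hno x hx hxr (hA i x hi h0)
  -- sign constancy for H i with (H i).eval r ≠ 0
  have hconst : ∀ i, i ≤ m → (H i).eval r ≠ 0 →
      ∀ x ∈ Set.Icc a b, (0 < (H i).eval x ↔ 0 < (H i).eval r) :=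
    fun i hi hir => sign_const_punctured (H i) har.le hrb.le hir (hHne i hi)
  -- χ function
  set χ : ℝ → ℕ → ℤ := fun x i =>
    if ¬((0:ℝ) < (H i).eval x ↔ 0 < (H (i+1)).eval x) then 1 else 0 with hχ
  have hVdiff : sturmV H m a - sturmV H m b = ∑ i ∈ Finset.range m, (χ a i - χ b i) := by
    rw [Finset.sum_sub_distrib]; rfl
  -- claim 1 : both nonvanishing at r
  have claim1 : ∀ i, i < m → (H i).eval r ≠ 0 → (H (i+1)).eval r ≠ 0 → χ a i = χ b i := by
    intro i hi h1 h2
    have e1 := hconst i hi.le h1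
    have e2 := hconst (i+1) hi h2
    simp only [hχ]
    have : ((0:ℝ) < (H i).eval a ↔ 0 < (H (i+1)).eval a) ↔
        ((0:ℝ) < (H i).eval b ↔ 0 < (H (i+1)).eval b) := by
      rw [e1 a ha, e2 a ha, e1 b hb, e2 b hb]
    exact if_congr (not_congr this) rfl rfl
  -- claim 2 : H (i+1) vanishes at r (and i+1 < m) : χ a i + χ a (i+1) = 1 (same for b)
  have claim2 : ∀ i, i + 1 < m → (H (i+1)).eval r = 0 →
      ∀ x ∈ Set.Icc a b, x ≠ r → χ x i + χ x (i+1) = 1 := by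
    intro i hi hvan x hx hxr
    have hi2 : (H i).eval r ≠ 0 := by
      intro h0
      exact hC i r (by omega) h0 hvan
    have hi3 : (H (i+2)).eval r ≠ 0 := by
      intro h0
      have := hD i r hi hvan
      rw [h0] at this
      simp at this
      exact hi2 this
    have hsum := hD i r hi hvan
    have e1 := hconst i (by omega) hi2 x hx
    have e3 := hconst (i+2) (by omega) hi3 x hx
    -- sign of H i at x is opposite to sign of H (i+2) at x
    have hopp : (0 < (H i).eval x) ↔ ¬ (0 < (H (i+2)).eval x) := by
      rw [e1, e3, hsum]
      constructor
      · intro h hh; linarith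
      · intro h
        rcases (neg_ne_zero.mpr hi3).lt_or_gt with h' | h'
        · exact absurd (by linarith : (0:ℝ) < (H (i+2)).eval r) h
        · exact h'
    simp only [hχ]
    by_cases hst : ((0:ℝ) < (H i).eval x ↔ 0 < (H (i+1)).eval x)
    · rw [if_neg (not_not_intro hst), if_pos (by tauto)]; norm_num
    · rw [if_pos hst, if_neg (by tauto)]; norm_num
  -- claim 0 : H 0 vanishes at r : δ 0 = sign of g at r
  have claim0 : (H 0).eval r = 0 →
      χ a 0 - χ b 0 = (if 0 < g.eval r then 1 else -1) := by
    intro h0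
    obtain ⟨hfr, hgr⟩ := (hE r).mp h0
    -- f and f' have no roots on [a,b] \ {r}
    have hfne : ∀ x ∈ Set.Icc a b, x ≠ r → f.eval x ≠ 0 ∧ (derivative f).eval x ≠ 0 := by
      intro x hx hxr
      exact ⟨fun h => hno x hx hxr (hfP x h), fun h => hno x hx hxr (hdP x h)⟩
    have hffd_a : f.eval a * (derivative f).eval a < 0 := by
      apply ffderiv_neg_left f har hfr
      intro x hx1 hx2
      exact hfne x ⟨hx1, hx2.le.trans hrb.le⟩ (ne_of_lt hx2)
    have hffd_b : 0 < f.eval b * (derivative f).eval b := by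
      apply ffderiv_pos_right f hrb hfr
      intro x hx1 hx2
      exact hfne x ⟨har.le.trans hx1.le, hx2⟩ (ne_of_gt hx1)
    -- sign of g is constant on [a,b]
    have hgconst : ∀ x ∈ Set.Icc a b, (0 < g.eval x ↔ 0 < g.eval r) :=
      sign_const_punctured g har.le hrb.le hgr
        (fun x hx hxr h => hno x hx hxr (hgP x h))
    -- at a : H 0 * H 1 is negative times sign of g r ; at b positive
    have key : ∀ x ∈ Set.Icc a b, x ≠ r →
        ((H 0).eval x * (H 1).eval x < 0 ↔
          f.eval x * ((derivative f).eval x * g.eval x) < 0) := by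
      intro x hx hxr
      obtain ⟨c, hc, hceq⟩ := hF x (hno x hx hxr)
      constructor
      · intro h
        nlinarith [mul_neg_of_neg_of_pos h hc]
      · intro h
        by_contra hcon
        push_neg at hcon
        nlinarith [mul_nonneg hcon hc.le]
    have hH0a : (H 0).eval a ≠ 0 := hHne 0 (by omega) a ha hra
    have hH1a : (H 1).eval a ≠ 0 := hHne 1 hm a ha hra
    have hH0b : (H 0).eval b ≠ 0 := hHne 0 (by omega) b hb hrb'
    have hH1b : (H 1).eval b ≠ 0 := hHne 1 hm b hb hrb'
    simp only [hχ]
    by_cases hgpos : 0 < g.eval r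
    · have hga : 0 < g.eval a := (hgconst a ha).mpr hgpos
      have hgb : 0 < g.eval b := (hgconst b hb).mpr hgpos
      have hna : (H 0).eval a * (H 1).eval a < 0 :=
        (key a ha hra).mpr (by nlinarith)
      have hpb : ¬ ((H 0).eval b * (H 1).eval b < 0) := by
        intro h
        nlinarith [(key b hb hrb').mp h]
      rw [if_pos ((neq_iff_mul_neg hH0a hH1a).mpr hna),
        if_neg (fun hcon => hpb ((neq_iff_mul_neg hH0b hH1b).mp hcon))]
      simp [hgpos]
    · have hgneg : g.eval r < 0 := (hgr.lt_or_gt).resolve_right hgpos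
      have hga : g.eval a < 0 := by
        have hga0 : g.eval a ≠ 0 := fun h => hno a ha hra (hgP a h)
        rcases hga0.lt_or_gt with h | h
        · exact h
        · exact absurd ((hgconst a ha).mp h) hgpos
      have hgb : g.eval b < 0 := by
        have hgb0 : g.eval b ≠ 0 := fun h => hno b hb hrb' (hgP b h)
        rcases hgb0.lt_or_gt with h | h
        · exact h
        · exact absurd ((hgconst b hb).mp h) hgpos
      have hpa : ¬ ((H 0).eval a * (H 1).eval a < 0) := by
        intro h
        nlinarith [(key a ha hra).mp h]
      have hnb : (H 0).eval b * (H 1).eval b < 0 :=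
        (key b hb hrb').mpr (by nlinarith)
      rw [if_neg (fun hcon => hpa ((neq_iff_mul_neg hH0a hH1a).mp hcon)),
        if_pos ((neq_iff_mul_neg hH0b hH1b).mpr hnb)]
      simp [hgpos]
  -- the value of the whole sum
  set c₀ : ℤ := if (H 0).eval r = 0 then (if 0 < g.eval r then 1 else -1) else 0 with hc₀
  have hHm : (H m).eval r ≠ 0 := by rw [hB]; norm_num
  have main : ∀ n j, j ≤ m → m - j = n → (H j).eval r ≠ 0 →
      (∑ i ∈ Finset.range j, (χ a i - χ b i)) = c₀ →
      (∑ i ∈ Finset.range m, (χ a i - χ b i)) = c₀ := by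
    intro n
    induction n using Nat.strong_induction_on with
    | _ n ih =>
      intro j hj hjn hjr hsum
      rcases eq_or_lt_of_le hj with rfl | hjm
      · exact hsum
      · by_cases hnext : (H (j+1)).eval r = 0
        · -- then j + 1 < m and H (j+2) nonzero at r
          have hj1m : j + 1 < m := by
            rcases eq_or_lt_of_le (Nat.succ_le_of_lt hjm) with h | h
            · exact absurd (h ▸ hnext) hHm
            · exact h
          have hj2r : (H (j+2)).eval r ≠ 0 := fun h => hC (j+1) r hj1m hnext h
          have hδ : (χ a j - χ b j) + (χ a (j+1) - χ b (j+1)) = 0 := by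
            have h1 := claim2 j hj1m hnext a ha hra
            have h2 := claim2 j hj1m hnext b hb hrb'
            omega
          apply ih (m - (j+2)) (by omega) (j+2) (by omega) rfl hj2r
          rw [Finset.sum_range_succ, Finset.sum_range_succ, hsum]
          omega
        · have hδ : χ a j - χ b j = 0 := by
            rw [claim1 j hjm hjr hnext]; ring
          apply ih (m - (j+1)) (by omega) (j+1) (by omega) rfl hnext
          rw [Finset.sum_range_succ, hsum, hδ]
          ring
  have hfinal : (∑ i ∈ Finset.range m, (χ a i - χ b i)) = c₀ := by
    by_cases h0 : (H 0).eval r = 0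
    · have h1r : (H 1).eval r ≠ 0 := fun h => hC 0 r hm h0 h
      apply main (m - 1) 1 hm rfl h1r
      rw [Finset.sum_range_one, claim0 h0, hc₀, if_pos h0]
    · apply main m 0 (by omega) rfl h0
      rw [Finset.sum_range_zero, hc₀, if_neg h0]
  rw [hVdiff, hfinal, hc₀]
  by_cases h0 : (H 0).eval r = 0
  · obtain ⟨hfr, hgr⟩ := (hE r).mp h0
    rw [if_pos h0]
    by_cases hgpos : 0 < g.eval r
    · rw [if_pos hgpos, if_pos ⟨hfr, hgpos⟩]
    · have : g.eval r < 0 := hgr.lt_or_gt.resolve_right hgpos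
      rw [if_neg hgpos, if_neg (fun h => hgpos h.2), if_pos ⟨hfr, this⟩]
  · rw [if_neg h0]
    have : ¬ (f.eval r = 0 ∧ g.eval r ≠ 0) := fun h => h0 ((hE r).mpr h)
    rw [if_neg, if_neg]
    · rintro ⟨h1, h2⟩; exact this ⟨h1, ne_of_lt h2⟩
    · rintro ⟨h1, h2⟩; exact this ⟨h1, ne_of_gt h2⟩


lemma interval_count (H : ℕ → Polynomial ℝ) (m : ℕ) (f g Pbig : Polynomial ℝ) (hm : 1 ≤ m)
    (hPbig : Pbig ≠ 0)
    (hA : ∀ i x, i ≤ m → (H i).eval x = 0 → Pbig.eval x = 0)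
    (hfP : ∀ x : ℝ, f.eval x = 0 → Pbig.eval x = 0)
    (hgP : ∀ x : ℝ, g.eval x = 0 → Pbig.eval x = 0)
    (hdP : ∀ x : ℝ, (derivative f).eval x = 0 → Pbig.eval x = 0)
    (hB : H m = 1)
    (hC : ∀ i x, i < m → (H i).eval x = 0 → (H (i+1)).eval x ≠ 0)
    (hD : ∀ i x, i + 1 < m → (H (i+1)).eval x = 0 →
        (H i).eval x = -((H (i+2)).eval x))
    (hE : ∀ x : ℝ, (H 0).eval x = 0 ↔ (f.eval x = 0 ∧ g.eval x ≠ 0))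
    (hF : ∀ y : ℝ, Pbig.eval y ≠ 0 → ∃ c : ℝ, 0 < c ∧
        (H 0).eval y * (H 1).eval y * c = f.eval y * ((derivative f).eval y * g.eval y)) :
    ∀ (n : ℕ) (a b : ℝ), a < b → Pbig.eval a ≠ 0 → Pbig.eval b ≠ 0 →
    ({x | x ∈ Set.Ioo a b ∧ Pbig.eval x = 0}.ncard = n) →
    sturmV H m a - sturmV H m b =
      ({x | x ∈ Set.Ioo a b ∧ f.eval x = 0 ∧ 0 < g.eval x}.ncard : ℤ)
      - ({x | x ∈ Set.Ioo a b ∧ f.eval x = 0 ∧ g.eval x < 0}.ncard : ℤ) := by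
  have hroots : {x : ℝ | Pbig.eval x = 0}.Finite := Polynomial.finite_setOf_isRoot hPbig
  intro n
  induction n with
  | zero =>
    intro a b hab hPa hPb hS
    set S := {x | x ∈ Set.Ioo a b ∧ Pbig.eval x = 0} with hSdef
    have hSfin : S.Finite := hroots.subset (fun x hx => hx.2)
    have hSempty : S = ∅ := (Set.ncard_eq_zero hSfin).mp hS
    have hnoroot : ∀ x ∈ Set.Ioo a b, Pbig.eval x ≠ 0 := by
      intro x hx h
      have hxS : x ∈ S := ⟨hx, h⟩
      rw [hSempty] at hxS
      exact Set.notMem_empty x hxS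
    set r := (a + b) / 2 with hr
    have har : a < r := by rw [hr]; linarith
    have hrb : r < b := by rw [hr]; linarith
    have hstep := local_step H m f g Pbig hm hA hfP hgP hdP hB hC hD hE hF har hrb
      (fun x hx hxr h => by
        rcases eq_or_lt_of_le hx.1 with rfl | h1
        · exact hPa h
        rcases eq_or_lt_of_le hx.2 with rfl | h2
        · exact hPb h
        exact hnoroot x ⟨h1, h2⟩ h)
    have hfr : f.eval r ≠ 0 := fun h => hnoroot r ⟨har, hrb⟩ (hfP r h)
    rw [hstep, if_neg (fun h => hfr h.1), if_neg (fun h => hfr h.1)]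
    have e1 : {x | x ∈ Set.Ioo a b ∧ f.eval x = 0 ∧ 0 < g.eval x} = ∅ := by
      ext x
      simp only [Set.mem_setOf_eq, Set.mem_empty_iff_false, iff_false]
      rintro ⟨hx, hfx, _⟩
      exact hnoroot x hx (hfP x hfx)
    have e2 : {x | x ∈ Set.Ioo a b ∧ f.eval x = 0 ∧ g.eval x < 0} = ∅ := by
      ext x
      simp only [Set.mem_setOf_eq, Set.mem_empty_iff_false, iff_false]
      rintro ⟨hx, hfx, _⟩
      exact hnoroot x hx (hfP x hfx)
    rw [e1, e2]
    simp
  | succ n ih =>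
    intro a b hab hPa hPb hS
    set S := {x | x ∈ Set.Ioo a b ∧ Pbig.eval x = 0} with hSdef
    have hSfin : S.Finite := hroots.subset (fun x hx => hx.2)
    have hSne : S.Nonempty := by
      rw [← Set.ncard_pos hSfin, hS]; omega
    -- minimal element r of S
    obtain ⟨r, hrS, hrmin⟩ : ∃ r ∈ S, ∀ z ∈ S, r ≤ z := by
      obtain ⟨r, hr1, hr2⟩ := Set.exists_min_image S id hSfin hSne
      exact ⟨r, hr1, hr2⟩
    -- find y
    obtain ⟨y, hry, hyb, hymin⟩ : ∃ y, r < y ∧ y ≤ b ∧ ∀ z ∈ S, z ≠ r → y ≤ z := by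
      by_cases hS' : (S \ {r}).Nonempty
      · have hfin' : (S \ {r}).Finite := hSfin.subset Set.diff_subset
        obtain ⟨y, hy1, hy2⟩ := Set.exists_min_image _ id hfin' hS'
        refine ⟨y, ?_, (hy1.1.1.2).le, fun z hz hzr => hy2 z ⟨hz, hzr⟩⟩
        rcases (hrmin y hy1.1).lt_or_eq with h | h
        · exact h
        · exact absurd h.symm hy1.2
      · refine ⟨b, hrS.1.2, le_rfl, fun z hz hzr => absurd ⟨hz, hzr⟩ (fun hmem => hS' ⟨z, hmem⟩)⟩
    set c := (r + y) / 2 with hc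
    have harc : a < r := hrS.1.1
    have hrc : r < c := by rw [hc]; linarith
    have hcy : c < y := by rw [hc]; linarith
    have hcb : c < b := lt_of_lt_of_le hcy hyb
    have hPc : Pbig.eval c ≠ 0 := by
      intro h
      have hcS : c ∈ S := ⟨⟨harc.trans hrc, hcb⟩, h⟩
      have := hymin c hcS (ne_of_gt hrc)
      linarith
    -- local step on [a, c]
    have hstep := local_step H m f g Pbig hm hA hfP hgP hdP hB hC hD hE hF harc hrc
      (fun x hx hxr h => by
        rcases eq_or_lt_of_le hx.1 with rfl | h1
        · exact hPa h
        have hxb : x < b := lt_of_le_of_lt hx.2 hcb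
        have hxS : x ∈ S := ⟨⟨h1, hxb⟩, h⟩
        have := hymin x hxS hxr
        linarith [hx.2, hcy])
    -- induction on [c, b]
    have hS' : {x | x ∈ Set.Ioo c b ∧ Pbig.eval x = 0} = S \ {r} := by
      ext x
      simp only [Set.mem_setOf_eq, Set.mem_diff, Set.mem_singleton_iff, hSdef]
      constructor
      · rintro ⟨hx, h⟩
        exact ⟨⟨⟨harc.trans (hrc.trans hx.1), hx.2⟩, h⟩, ne_of_gt (hrc.trans hx.1)⟩
      · rintro ⟨⟨hx, h⟩, hxr⟩
        exact ⟨⟨lt_of_lt_of_le hcy (hymin x ⟨hx, h⟩ hxr), hx.2⟩, h⟩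
    have hScard : {x | x ∈ Set.Ioo c b ∧ Pbig.eval x = 0}.ncard = n := by
      rw [hS']
      rw [Set.ncard_diff_singleton_of_mem hrS, hS]
      omega
    have hrec := ih c b hcb hPc hPb hScard
    -- combine the counting sets
    have hsplitP : {x | x ∈ Set.Ioo a b ∧ f.eval x = 0 ∧ 0 < g.eval x} =
        (if f.eval r = 0 ∧ 0 < g.eval r then insert r {x | x ∈ Set.Ioo c b ∧ f.eval x = 0 ∧ 0 < g.eval x}
          else {x | x ∈ Set.Ioo c b ∧ f.eval x = 0 ∧ 0 < g.eval x}) := by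
      ext x
      by_cases hcond : f.eval r = 0 ∧ 0 < g.eval r <;>
        simp only [hcond, if_true, if_false, Set.mem_insert_iff, Set.mem_setOf_eq] <;>
        constructor
      · rintro ⟨hx, hfx, hgx⟩
        have hxS : x ∈ S := ⟨hx, hfP x hfx⟩
        by_cases hxr : x = r
        · exact Or.inl hxr
        · exact Or.inr ⟨⟨lt_of_lt_of_le hcy (hymin x hxS hxr), hx.2⟩, hfx, hgx⟩
      · rintro (rfl | ⟨hx, hfx, hgx⟩)
        · exact ⟨⟨harc, hrc.trans (lt_of_lt_of_le hcy hyb)⟩, hcond⟩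
        · exact ⟨⟨harc.trans (hrc.trans hx.1), hx.2⟩, hfx, hgx⟩
      · rintro ⟨hx, hfx, hgx⟩
        have hxS : x ∈ S := ⟨hx, hfP x hfx⟩
        have hxr : x ≠ r := by
          rintro rfl
          exact hcond ⟨hfx, hgx⟩
        exact ⟨⟨lt_of_lt_of_le hcy (hymin x hxS hxr), hx.2⟩, hfx, hgx⟩
      · rintro ⟨hx, hfx, hgx⟩
        exact ⟨⟨harc.trans (hrc.trans hx.1), hx.2⟩, hfx, hgx⟩
    have hsplitN : {x | x ∈ Set.Ioo a b ∧ f.eval x = 0 ∧ g.eval x < 0} =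
        (if f.eval r = 0 ∧ g.eval r < 0 then insert r {x | x ∈ Set.Ioo c b ∧ f.eval x = 0 ∧ g.eval x < 0}
          else {x | x ∈ Set.Ioo c b ∧ f.eval x = 0 ∧ g.eval x < 0}) := by
      ext x
      by_cases hcond : f.eval r = 0 ∧ g.eval r < 0 <;>
        simp only [hcond, if_true, if_false, Set.mem_insert_iff, Set.mem_setOf_eq] <;>
        constructor
      · rintro ⟨hx, hfx, hgx⟩
        have hxS : x ∈ S := ⟨hx, hfP x hfx⟩
        by_cases hxr : x = r
        · exact Or.inl hxr
        · exact Or.inr ⟨⟨lt_of_lt_of_le hcy (hymin x hxS hxr), hx.2⟩, hfx, hgx⟩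
      · rintro (rfl | ⟨hx, hfx, hgx⟩)
        · exact ⟨⟨harc, hrc.trans (lt_of_lt_of_le hcy hyb)⟩, hcond⟩
        · exact ⟨⟨harc.trans (hrc.trans hx.1), hx.2⟩, hfx, hgx⟩
      · rintro ⟨hx, hfx, hgx⟩
        have hxS : x ∈ S := ⟨hx, hfP x hfx⟩
        have hxr : x ≠ r := by
          rintro rfl
          exact hcond ⟨hfx, hgx⟩
        exact ⟨⟨lt_of_lt_of_le hcy (hymin x hxS hxr), hx.2⟩, hfx, hgx⟩
      · rintro ⟨hx, hfx, hgx⟩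
        exact ⟨⟨harc.trans (hrc.trans hx.1), hx.2⟩, hfx, hgx⟩
    have hffin : {x : ℝ | f.eval x = 0}.Finite := by
      have hf0 : f ≠ 0 := by
        intro h
        apply hPbig
        apply Polynomial.eq_zero_of_infinite_isRoot
        have huniv : {x : ℝ | Pbig.IsRoot x} = Set.univ :=
          Set.eq_univ_of_forall (fun x => hfP x (by simp [h]))
        rw [huniv]
        exact Set.infinite_univ
      exact Polynomial.finite_setOf_isRoot hf0
    have hfinP : {x | x ∈ Set.Ioo c b ∧ f.eval x = 0 ∧ 0 < g.eval x}.Finite :=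
      hffin.subset (fun x hx => hx.2.1)
    have hfinN : {x | x ∈ Set.Ioo c b ∧ f.eval x = 0 ∧ g.eval x < 0}.Finite :=
      hffin.subset (fun x hx => hx.2.1)
    have hrnotinP : r ∉ {x | x ∈ Set.Ioo c b ∧ f.eval x = 0 ∧ 0 < g.eval x} := by
      rintro ⟨hx, _⟩
      linarith [hx.1, hrc]
    have hrnotinN : r ∉ {x | x ∈ Set.Ioo c b ∧ f.eval x = 0 ∧ g.eval x < 0} := by
      rintro ⟨hx, _⟩
      linarith [hx.1, hrc]
    have goal : sturmV H m a - sturmV H m b =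
        (sturmV H m a - sturmV H m c) + (sturmV H m c - sturmV H m b) := by ring
    rw [goal, hstep, hrec, hsplitP, hsplitN]
    by_cases h1 : f.eval r = 0 ∧ 0 < g.eval r
    · have h2 : ¬ (f.eval r = 0 ∧ g.eval r < 0) := fun h => by linarith [h1.2, h.2]
      simp only [if_pos h1, if_neg h2, Set.ncard_insert_of_notMem hrnotinP hfinP]
      push_cast
      ring
    · by_cases h2 : f.eval r = 0 ∧ g.eval r < 0
      · simp only [if_neg h1, if_pos h2, Set.ncard_insert_of_notMem hrnotinN hfinN]
        push_cast
        ring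
      · simp only [if_neg h1, if_neg h2]
        push_cast
        ring

lemma signChanges_eq_sum (S : ℕ → Polynomial ℝ) (m : ℕ) (σ : Polynomial ℝ → Prop)
    (x : ℝ) (hiff : ∀ i, i ≤ m → (σ (S i) ↔ 0 < (S i).eval x)) :
    (signChanges S m σ : ℤ) = sturmV S m x := by
  unfold signChanges sturmV
  have hset : {i : ℕ | i < m ∧ ¬ (σ (S i) ↔ σ (S (i + 1)))} =
      ↑((Finset.range m).filter
        (fun i => ¬((0:ℝ) < (S i).eval x ↔ 0 < (S (i+1)).eval x))) := by
    ext i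
    simp only [Finset.coe_filter, Finset.mem_range, Set.mem_setOf_eq]
    constructor
    · rintro ⟨h1, h2⟩
      exact ⟨h1, fun hc => h2 (by rw [hiff i h1.le, hiff (i+1) h1]; exact hc)⟩
    · rintro ⟨h1, h2⟩
      exact ⟨h1, fun hc => h2 (by rw [← hiff i h1.le, ← hiff (i+1) h1]; exact hc)⟩
  rw [hset, Set.ncard_coe_finset, Finset.card_filter]
  push_cast
  rfl

/-- Sturm–Tarski / generalized Sturm theorem: for nonzero `f g ∈ ℝ[X]`
with `f` nonconstant (so `f'·g ≠ 0`), one has `ν(f, f'·g) = N(f, g)`, where `m` is the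
stopping index of the canonical sequence for `f` and `f'·g` (the first index `m ≥ 1`
with `h_m ∣ h_{m−1}`). -/
theorem sturm_tarski (f g : Polynomial ℝ) (hf : f ≠ 0) (hg : g ≠ 0)
    (hfc : 1 ≤ f.natDegree) (m : ℕ) (hm : 1 ≤ m)
    (hstop : sturmAux f (Polynomial.derivative f * g) m ∣
      sturmAux f (Polynomial.derivative f * g) (m - 1))
    (hmin : ∀ k, 1 ≤ k → k < m →
      ¬ sturmAux f (Polynomial.derivative f * g) k ∣
        sturmAux f (Polynomial.derivative f * g) (k - 1)) :
    sturmNu f (Polynomial.derivative f * g) m = sturmN f g := by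
  set q : Polynomial ℝ := Polynomial.derivative f * g with hqdef
  have hq : q ≠ 0 := by
    apply mul_ne_zero _ hg
    intro h
    have := Polynomial.natDegree_eq_zero_of_derivative_eq_zero h
    omega
  have hne : ∀ k, k ≤ m → sturmAux f q k ≠ 0 := sturmAux_ne_zero f q m hf hq hmin
  have hdvd : ∀ k, k ≤ m → sturmAux f q m ∣ sturmAux f q k :=
    sturmAux_dvd_of_stop f q m hm hstop
  have hcommon := sturmAux_common_dvd f q m
  have hd0 : sturmAux f q m ≠ 0 := hne m le_rfl
  set H : ℕ → Polynomial ℝ := fun i => sturmAux f q i / sturmAux f q m with hHdef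
  have hdH : ∀ k, k ≤ m → sturmAux f q m * H k = sturmAux f q k := fun k hk =>
    EuclideanDomain.mul_div_cancel' hd0 (hdvd k hk)
  set Pbig : Polynomial ℝ := ∏ k ∈ Finset.range (m+1), sturmAux f q k with hPdef
  have hPbig : Pbig ≠ 0 := Finset.prod_ne_zero_iff.mpr
    (fun k hk => hne k (Nat.lt_succ_iff.mp (Finset.mem_range.mp hk)))
  have hPk : ∀ k, k ≤ m → ∀ x : ℝ, (sturmAux f q k).eval x = 0 → Pbig.eval x = 0 := by
    intro k hk x hx
    rw [hPdef, Polynomial.eval_prod]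
    exact Finset.prod_eq_zero (Finset.mem_range.mpr (by omega)) hx
  have hA : ∀ i (x : ℝ), i ≤ m → (H i).eval x = 0 → Pbig.eval x = 0 := by
    intro i x hi hx
    apply hPk i hi x
    rw [← hdH i hi, Polynomial.eval_mul, hx, mul_zero]
  have hfP : ∀ x : ℝ, f.eval x = 0 → Pbig.eval x = 0 := fun x hx => hPk 0 (by omega) x hx
  have hgP : ∀ x : ℝ, g.eval x = 0 → Pbig.eval x = 0 := by
    intro x hx
    apply hPk 1 hm x
    show q.eval x = 0
    rw [hqdef, Polynomial.eval_mul, hx, mul_zero]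
  have hdP : ∀ x : ℝ, (Polynomial.derivative f).eval x = 0 → Pbig.eval x = 0 := by
    intro x hx
    apply hPk 1 hm x
    show q.eval x = 0
    rw [hqdef, Polynomial.eval_mul, hx, zero_mul]
  have hB : H m = 1 := EuclideanDomain.div_self hd0
  have hC : ∀ i (x : ℝ), i < m → (H i).eval x = 0 → (H (i+1)).eval x ≠ 0 := by
    intro i x hi h0 h1
    have e0 : (X - C x) ∣ H i := Polynomial.dvd_iff_isRoot.mpr h0
    have e1 : (X - C x) ∣ H (i+1) := Polynomial.dvd_iff_isRoot.mpr h1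
    have d0 : sturmAux f q m * (X - C x) ∣ sturmAux f q i := by
      rw [← hdH i hi.le]; exact mul_dvd_mul_left _ e0
    have d1 : sturmAux f q m * (X - C x) ∣ sturmAux f q (i+1) := by
      rw [← hdH (i+1) hi]; exact mul_dvd_mul_left _ e1
    have := hcommon i hi _ d0 d1
    have hu : (X - C x) ∣ (1 : Polynomial ℝ) := by
      rw [← mul_dvd_mul_iff_left hd0, mul_one]
      exact this
    exact Polynomial.not_isUnit_X_sub_C x (isUnit_of_dvd_one hu)
  have hD : ∀ i (x : ℝ), i + 1 < m → (H (i+1)).eval x = 0 →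
      (H i).eval x = -((H (i+2)).eval x) := by
    intro i x hi h0
    have hrel : sturmAux f q m * (H i + H (i+2))
        = sturmAux f q m * (H (i+1) * (sturmAux f q i / sturmAux f q (i+1))) := by
      rw [mul_add, hdH i (by omega), hdH (i+2) (by omega), ← mul_assoc,
        hdH (i+1) (by omega)]
      exact sturmAux_rec f q i
    have := mul_left_cancel₀ hd0 hrel
    have heval := congrArg (Polynomial.eval x) this
    simp only [Polynomial.eval_add, Polynomial.eval_mul, h0, zero_mul] at heval
    linarith
  have hE : ∀ x : ℝ, (H 0).eval x = 0 ↔ (f.eval x = 0 ∧ g.eval x ≠ 0) := by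
    intro x
    have hf0 : sturmAux f q m * H 0 = f := hdH 0 (by omega)
    constructor
    · intro h0
      have hfx : f.eval x = 0 := by
        rw [← hf0, Polynomial.eval_mul, h0, mul_zero]
      refine ⟨hfx, fun hgx => ?_⟩
      set rr := f.rootMultiplicity x with hrr
      have hrr1 : 1 ≤ rr := (Polynomial.rootMultiplicity_pos hf).mpr hfx
      have he_f : (X - C x) ^ rr ∣ f := f.pow_rootMultiplicity_dvd x
      have he_q : (X - C x) ^ rr ∣ q := by
        have h1 : (Polynomial.derivative f).rootMultiplicity x = rr - 1 :=
          f.derivative_rootMultiplicity_of_root hfx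
        have hd' : (X - C x) ^ (rr - 1) ∣ Polynomial.derivative f := by
          rw [← h1]; exact Polynomial.pow_rootMultiplicity_dvd _ x
        have hg' : (X - C x) ∣ g := Polynomial.dvd_iff_isRoot.mpr hgx
        have := mul_dvd_mul hd' hg'
        rwa [← pow_succ, (by omega : rr - 1 + 1 = rr)] at this
      have he_d : (X - C x) ^ rr ∣ sturmAux f q m := hcommon 0 hm _ he_f he_q
      have hWx : (X - C x) ∣ H 0 := Polynomial.dvd_iff_isRoot.mpr h0
      have : (X - C x) ^ rr * (X - C x) ∣ f := by
        rw [← hf0]; exact mul_dvd_mul he_d hWx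
      rw [← pow_succ] at this
      have := (Polynomial.le_rootMultiplicity_iff hf).mpr this
      omega
    · rintro ⟨hfx, hgx⟩
      have hrr1 : 1 ≤ f.rootMultiplicity x := (Polynomial.rootMultiplicity_pos hf).mpr hfx
      have hH0ne : H 0 ≠ 0 := by
        intro h
        apply hf
        rw [← hf0, h, mul_zero]
      have hmulne : sturmAux f q m * H 0 ≠ 0 := by rw [hf0]; exact hf
      have hsum : (sturmAux f q m).rootMultiplicity x + (H 0).rootMultiplicity x
          = f.rootMultiplicity x := by
        rw [← Polynomial.rootMultiplicity_mul hmulne, hf0]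
      have hqmult : q.rootMultiplicity x = f.rootMultiplicity x - 1 := by
        have hqne : Polynomial.derivative f * g ≠ 0 := by rw [← hqdef]; exact hq
        rw [hqdef, Polynomial.rootMultiplicity_mul hqne,
          f.derivative_rootMultiplicity_of_root hfx,
          Polynomial.rootMultiplicity_eq_zero hgx]
        omega
      have hdle : (sturmAux f q m).rootMultiplicity x ≤ f.rootMultiplicity x - 1 := by
        rw [← hqmult]
        refine (Polynomial.le_rootMultiplicity_iff hq).mpr ?_
        exact dvd_trans ((sturmAux f q m).pow_rootMultiplicity_dvd x) (hdvd 1 hm)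
      have hpos : 0 < (H 0).rootMultiplicity x := by omega
      exact (Polynomial.rootMultiplicity_pos hH0ne).mp hpos
  have hF : ∀ y : ℝ, Pbig.eval y ≠ 0 → ∃ c : ℝ, 0 < c ∧
      (H 0).eval y * (H 1).eval y * c
        = f.eval y * ((Polynomial.derivative f).eval y * g.eval y) := by
    intro y hy
    have hdy : (sturmAux f q m).eval y ≠ 0 := fun h => hy (hPk m le_rfl y h)
    refine ⟨((sturmAux f q m).eval y)^2,
      lt_of_le_of_ne (sq_nonneg _) (Ne.symm (pow_ne_zero 2 hdy)), ?_⟩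
    have e0 : (sturmAux f q m).eval y * (H 0).eval y = f.eval y := by
      rw [← Polynomial.eval_mul, hdH 0 (by omega)]; rfl
    have e1 : (sturmAux f q m).eval y * (H 1).eval y
        = (Polynomial.derivative f).eval y * g.eval y := by
      rw [← Polynomial.eval_mul, hdH 1 hm]
      show q.eval y = _
      rw [hqdef, Polynomial.eval_mul]
    linear_combination ((sturmAux f q m).eval y * (H 1).eval y) * e0 + f.eval y * e1
  -- choose endpoints A and B
  have hTfin : {x : ℝ | Pbig.eval x = 0}.Finite := Polynomial.finite_setOf_isRoot hPbig
  obtain ⟨lb, hlb⟩ : ∃ lb : ℝ, ∀ x ∈ {x : ℝ | Pbig.eval x = 0}, lb ≤ x := by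
    obtain ⟨lb, hlb⟩ := hTfin.bddBelow
    exact ⟨lb, fun x hx => hlb hx⟩
  obtain ⟨ub, hub⟩ : ∃ ub : ℝ, ∀ x ∈ {x : ℝ | Pbig.eval x = 0}, x ≤ ub := by
    obtain ⟨ub, hub⟩ := hTfin.bddAbove
    exact ⟨ub, fun x hx => hub hx⟩
  set B : ℝ := ub + 1 with hBdef
  set A : ℝ := min (lb - 1) (B - 1) with hAdef
  have hAB : A < B := by
    have : A ≤ B - 1 := min_le_right _ _
    linarith
  have hAno : ∀ x : ℝ, x ≤ A → Pbig.eval x ≠ 0 := by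
    intro x hx h
    have h1 := hlb x h
    have h2 : A ≤ lb - 1 := min_le_left _ _
    linarith
  have hBno : ∀ x : ℝ, B ≤ x → Pbig.eval x ≠ 0 := by
    intro x hx h
    have h1 := hub x h
    linarith
  have hPa : Pbig.eval A ≠ 0 := hAno A le_rfl
  have hPb : Pbig.eval B ≠ 0 := hBno B le_rfl
  -- sturmNu as difference of V
  have hbot : (signChanges H m sigmaBot : ℤ) = sturmV H m A := by
    apply signChanges_eq_sum
    intro i hi
    exact sigmaBot_iff (H i) A (fun x hx h0 => hAno x hx (hA i x hi h0))
  have htop : (signChanges H m sigmaTop : ℤ) = sturmV H m B := by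
    apply signChanges_eq_sum
    intro i hi
    exact sigmaTop_iff (H i) B (fun x hx h0 => hBno x hx (hA i x hi h0))
  have hNu : sturmNu f q m = sturmV H m A - sturmV H m B := by
    unfold sturmNu
    rw [← hbot, ← htop]
  -- apply the interval count
  have hcount := interval_count H m f g Pbig hm hPbig hA hfP hgP hdP hB hC hD hE hF
    ({x | x ∈ Set.Ioo A B ∧ Pbig.eval x = 0}.ncard) A B hAB hPa hPb rfl
  -- identify the sets with the global root sets
  have eP : {x : ℝ | x ∈ Set.Ioo A B ∧ f.eval x = 0 ∧ 0 < g.eval x}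
      = {x : ℝ | f.eval x = 0 ∧ 0 < g.eval x} := by
    ext x
    simp only [Set.mem_setOf_eq]
    constructor
    · rintro ⟨_, h⟩; exact h
    · rintro ⟨h1, h2⟩
      have hx : x ∈ {x : ℝ | Pbig.eval x = 0} := hfP x h1
      have l1 := hlb x hx
      have l2 := hub x hx
      have : A ≤ lb - 1 := min_le_left _ _
      exact ⟨⟨by linarith, by linarith⟩, h1, h2⟩
  have eN : {x : ℝ | x ∈ Set.Ioo A B ∧ f.eval x = 0 ∧ g.eval x < 0}
      = {x : ℝ | f.eval x = 0 ∧ g.eval x < 0} := by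
    ext x
    simp only [Set.mem_setOf_eq]
    constructor
    · rintro ⟨_, h⟩; exact h
    · rintro ⟨h1, h2⟩
      have hx : x ∈ {x : ℝ | Pbig.eval x = 0} := hfP x h1
      have l1 := hlb x hx
      have l2 := hub x hx
      have : A ≤ lb - 1 := min_le_left _ _
      exact ⟨⟨by linarith, by linarith⟩, h1, h2⟩
  rw [hNu, hcount, eP, eN]
  rfl
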